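/- Let V be a Poisson vertex algebra which is an algebra of differential polynomials in variables {u_i}, and suppose the λ-bracket on generators {u_i_λ u_j} = H_{ji}(λ) satisfies skew-symmetry on generators: {u_i_λ u_j} + {u_j_{-λ-∂} u_i} = 0 for all i,j. Then the λ-bracket defined on all of V by the Master Formula satisfies skew-symmetry {f_λ g} + {g_{-λ-∂} f} = 0 for all f, g ∈ V. -/

import Mathlib

open Polynomial

section LambdaBracket

variable {F V : Type*} [Field F] [CharZero F] [CommRing V] [Algebra F V]

/-- Apply a derivation coefficientwise to a `λ`-polynomial. -/
noncomputable def dCoeff (der : V →ₗ[F] V) (p : Polynomial V) : Polynomial V :=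
  p.sum fun n c => Polynomial.C (der c) * Polynomial.X ^ n

/-- The operator `λ + ∂` on `λ`-polynomials. -/
noncomputable def opS (der : V →ₗ[F] V) (p : Polynomial V) : Polynomial V :=
  Polynomial.X * p + dCoeff der p

/-- The operator `-λ - ∂` on `λ`-polynomials. -/
noncomputable def opT (der : V →ₗ[F] V) (p : Polynomial V) : Polynomial V :=
  -(Polynomial.X * p) - dCoeff der p

/-- `{f_{-λ-∂} g}` obtained from `{f_λ g} = Σ_n c_n λ^n` as `Σ_n (-λ-∂)^n c_n`. -/
noncomputable def negSubst (der : V →ₗ[F] V) (p : Polynomial V) : Polynomial V :=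
  p.sum fun n c => (opT der)^[n] (Polynomial.C c)

/-- The Master Formula
`{f_λ g} = Σ_{i,j,m,n} (∂g/∂u_j^{(n)}) (λ+∂)^n H_{ji}(λ+∂) (-λ-∂)^m (∂f/∂u_i^{(m)})`. -/
noncomputable def masterFormula {ℓ : ℕ} (der : V →ₗ[F] V)
    (Dp : Fin ℓ → ℕ → (V →ₗ[F] V)) (H : Fin ℓ → Fin ℓ → Polynomial V)
    (f g : V) : Polynomial V :=
  ∑ᶠ (i : Fin ℓ), ∑ᶠ (j : Fin ℓ), ∑ᶠ (m : ℕ), ∑ᶠ (n : ℕ),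
    Polynomial.C (Dp j n g) *
      (opS der)^[n] ((H j i).sum fun p c =>
        Polynomial.C c * (opS der)^[p] ((opT der)^[m] (Polynomial.C (Dp i m f))))

end LambdaBracket

section AuxLemmas

variable {F V : Type*} [Field F] [CharZero F] [CommRing V] [Algebra F V]
variable (der : V →ₗ[F] V)

lemma dCoeff_monomial (n : ℕ) (a : V) :
    dCoeff der (monomial n a) = monomial n (der a) := by
  rw [dCoeff, Polynomial.sum_monomial_index]
  · rw [C_mul_X_pow_eq_monomial]
  · simp

lemma dCoeff_zero : dCoeff der 0 = 0 := by
  rw [dCoeff, Polynomial.sum_zero_index]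

lemma dCoeff_add (p q : Polynomial V) :
    dCoeff der (p + q) = dCoeff der p + dCoeff der q := by
  rw [dCoeff, dCoeff, dCoeff, Polynomial.sum_add_index] <;> simp [add_mul]

lemma dCoeff_C (a : V) : dCoeff der (C a) = C (der a) := by
  simpa using dCoeff_monomial der 0 a

lemma coeff_dCoeff (p : Polynomial V) (k : ℕ) :
    (dCoeff der p).coeff k = der (p.coeff k) := by
  induction p using Polynomial.induction_on' with
  | add p q hp hq => simp [dCoeff_add, hp, hq]
  | monomial n a =>
    rw [dCoeff_monomial]
    simp only [Polynomial.coeff_monomial]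
    split <;> simp

lemma dCoeff_X_mul (p : Polynomial V) :
    dCoeff der (X * p) = X * dCoeff der p := by
  ext k
  rcases k with _ | k
  · simp [coeff_dCoeff, Polynomial.mul_coeff_zero]
  · simp [coeff_dCoeff, Polynomial.coeff_X_mul]

lemma opT_eq (p : Polynomial V) : opT der p = -(opS der p) := by
  rw [opT, opS]; ring

lemma opS_add (p q : Polynomial V) :
    opS der (p + q) = opS der p + opS der q := by
  rw [opS, opS, opS, dCoeff_add]; ring

lemma opS_zero : opS der 0 = 0 := by
  rw [opS, dCoeff_zero]; ring

lemma opS_neg (p : Polynomial V) : opS der (-p) = -opS der p := by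
  have h := opS_add der p (-p)
  rw [add_neg_cancel, opS_zero] at h
  exact eq_neg_of_add_eq_zero_right h.symm

lemma opS_X_mul (p : Polynomial V) : opS der (X * p) = X * opS der p := by
  rw [opS, opS, dCoeff_X_mul]; ring

lemma dCoeff_opS (p : Polynomial V) :
    dCoeff der (opS der p) = opS der (dCoeff der p) := by
  rw [opS, opS, dCoeff_add, dCoeff_X_mul]

lemma opT_add (p q : Polynomial V) :
    opT der (p + q) = opT der p + opT der q := by
  simp only [opT_eq, opS_add]; ring

lemma opT_zero : opT der 0 = 0 := by simp [opT_eq, opS_zero]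

lemma opT_neg (p : Polynomial V) : opT der (-p) = -opT der p := by
  simp only [opT_eq, opS_neg]

lemma opT_X_mul (p : Polynomial V) : opT der (X * p) = X * opT der p := by
  simp only [opT_eq, opS_X_mul]; ring

lemma dCoeff_opT (p : Polynomial V) :
    dCoeff der (opT der p) = opT der (dCoeff der p) := by
  have h : dCoeff der (-(opS der p)) = -(dCoeff der (opS der p)) := by
    have h2 := dCoeff_add der (opS der p) (-(opS der p))
    rw [add_neg_cancel, dCoeff_zero] at h2
    exact eq_neg_of_add_eq_zero_right h2.symm
  simp only [opT_eq, h, dCoeff_opS]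

-- iterate lemmas for S
lemma iter_S_zero (n : ℕ) : (opS der)^[n] (0 : Polynomial V) = 0 := by
  induction n with
  | zero => rfl
  | succ n ih => rw [Function.iterate_succ_apply', ih, opS_zero]

lemma iter_S_add (n : ℕ) (p q : Polynomial V) :
    (opS der)^[n] (p + q) = (opS der)^[n] p + (opS der)^[n] q := by
  induction n generalizing p q with
  | zero => rfl
  | succ n ih => simp only [Function.iterate_succ_apply', ih, opS_add]

lemma iter_S_neg (n : ℕ) (p : Polynomial V) :
    (opS der)^[n] (-p) = -(opS der)^[n] p := by
  induction n generalizing p with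
  | zero => rfl
  | succ n ih => simp only [Function.iterate_succ_apply', ih, opS_neg]

lemma iter_S_X_mul (n : ℕ) (p : Polynomial V) :
    (opS der)^[n] (X * p) = X * (opS der)^[n] p := by
  induction n generalizing p with
  | zero => rfl
  | succ n ih => simp only [Function.iterate_succ_apply', ih, opS_X_mul]

lemma dCoeff_iter_S (n : ℕ) (p : Polynomial V) :
    dCoeff der ((opS der)^[n] p) = (opS der)^[n] (dCoeff der p) := by
  induction n generalizing p with
  | zero => rfl
  | succ n ih => simp only [Function.iterate_succ_apply', ih, dCoeff_opS]

-- iterate lemmas for T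
lemma iter_T_zero (n : ℕ) : (opT der)^[n] (0 : Polynomial V) = 0 := by
  induction n with
  | zero => rfl
  | succ n ih => rw [Function.iterate_succ_apply', ih, opT_zero]

lemma iter_T_add (n : ℕ) (p q : Polynomial V) :
    (opT der)^[n] (p + q) = (opT der)^[n] p + (opT der)^[n] q := by
  induction n generalizing p q with
  | zero => rfl
  | succ n ih => simp only [Function.iterate_succ_apply', ih, opT_add]

lemma iter_T_neg (n : ℕ) (p : Polynomial V) :
    (opT der)^[n] (-p) = -(opT der)^[n] p := by
  induction n generalizing p with
  | zero => rfl
  | succ n ih => simp only [Function.iterate_succ_apply', ih, opT_neg]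

lemma iter_T_X_mul (n : ℕ) (p : Polynomial V) :
    (opT der)^[n] (X * p) = X * (opT der)^[n] p := by
  induction n generalizing p with
  | zero => rfl
  | succ n ih => simp only [Function.iterate_succ_apply', ih, opT_X_mul]

lemma dCoeff_iter_T (n : ℕ) (p : Polynomial V) :
    dCoeff der ((opT der)^[n] p) = (opT der)^[n] (dCoeff der p) := by
  induction n generalizing p with
  | zero => rfl
  | succ n ih => simp only [Function.iterate_succ_apply', ih, dCoeff_opT]

-- negSubst lemmas
lemma negSubst_monomial (n : ℕ) (a : V) :
    negSubst der (monomial n a) = (opT der)^[n] (C a) := by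
  rw [negSubst, Polynomial.sum_monomial_index]
  rw [C_0, iter_T_zero]

lemma negSubst_zero : negSubst der (0 : Polynomial V) = 0 := by
  rw [negSubst, Polynomial.sum_zero_index]

lemma negSubst_add (p q : Polynomial V) :
    negSubst der (p + q) = negSubst der p + negSubst der q := by
  rw [negSubst, negSubst, negSubst, Polynomial.sum_add_index]
  · intro n; rw [C_0, iter_T_zero]
  · intro n b c; rw [C_add, iter_T_add]

lemma negSubst_neg (p : Polynomial V) : negSubst der (-p) = -negSubst der p := by
  have h := negSubst_add der p (-p)
  rw [add_neg_cancel, negSubst_zero] at h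
  exact eq_neg_of_add_eq_zero_right h.symm

lemma negSubst_C (a : V) : negSubst der (C a) = C a := by
  simpa using negSubst_monomial der 0 a

lemma negSubst_X_mul (p : Polynomial V) :
    negSubst der (X * p) = opT der (negSubst der p) := by
  induction p using Polynomial.induction_on' with
  | add p q hp hq => rw [mul_add, negSubst_add, hp, hq, negSubst_add, opT_add]
  | monomial n a =>
    rw [X_mul_monomial, negSubst_monomial, negSubst_monomial,
      Function.iterate_succ_apply']

lemma negSubst_opS (p : Polynomial V) :
    negSubst der (opS der p) = -(X * negSubst der p) := by
  induction p using Polynomial.induction_on' with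
  | add p q hp hq =>
    rw [opS_add, negSubst_add, hp, hq, negSubst_add]; ring
  | monomial n a =>
    rw [opS, dCoeff_monomial, negSubst_add, negSubst_X_mul, negSubst_monomial,
      negSubst_monomial, opT]
    rw [← dCoeff_C der a, ← dCoeff_iter_T]
    ring

lemma negSubst_opT (p : Polynomial V) :
    negSubst der (opT der p) = X * negSubst der p := by
  rw [opT_eq, negSubst_neg, negSubst_opS, neg_neg]

-- The sandwich operator Φ_h
noncomputable def Phi (h q : Polynomial V) : Polynomial V :=
  h.sum fun p c => C c * (opS der)^[p] q

lemma Phi_monomial (p : ℕ) (c : V) (q : Polynomial V) :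
    Phi der (monomial p c) q = C c * (opS der)^[p] q := by
  rw [Phi, Polynomial.sum_monomial_index]
  rw [C_0, zero_mul]

lemma Phi_zero_left (q : Polynomial V) : Phi der 0 q = 0 := by
  rw [Phi, Polynomial.sum_zero_index]

lemma Phi_add_left (h h' q : Polynomial V) :
    Phi der (h + h') q = Phi der h q + Phi der h' q := by
  rw [Phi, Phi, Phi, Polynomial.sum_add_index]
  · intro n; rw [C_0, zero_mul]
  · intro n b c; rw [C_add, add_mul]

lemma Phi_neg_left (h q : Polynomial V) : Phi der (-h) q = -Phi der h q := by
  have hh := Phi_add_left der h (-h) q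
  rw [add_neg_cancel, Phi_zero_left] at hh
  exact eq_neg_of_add_eq_zero_right hh.symm

lemma Phi_C_left (c : V) (q : Polynomial V) : Phi der (C c) q = C c * q := by
  simpa using Phi_monomial der 0 c q

lemma Phi_zero_right (h : Polynomial V) : Phi der h 0 = 0 := by
  rw [Phi, Polynomial.sum]
  apply Finset.sum_eq_zero
  intro p _
  rw [iter_S_zero, mul_zero]

lemma Phi_add_right (h q r : Polynomial V) :
    Phi der h (q + r) = Phi der h q + Phi der h r := by
  rw [Phi, Phi, Phi, Polynomial.sum, Polynomial.sum, Polynomial.sum,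
    ← Finset.sum_add_distrib]
  apply Finset.sum_congr rfl
  intro p _
  rw [iter_S_add, mul_add]

lemma Phi_neg_right (h q : Polynomial V) : Phi der h (-q) = -Phi der h q := by
  have hh := Phi_add_right der h q (-q)
  rw [add_neg_cancel, Phi_zero_right] at hh
  exact eq_neg_of_add_eq_zero_right hh.symm

lemma Phi_X_mul_left (h q : Polynomial V) :
    Phi der (X * h) q = Phi der h (opS der q) := by
  induction h using Polynomial.induction_on' with
  | add p r hp hr => rw [mul_add, Phi_add_left, hp, hr, Phi_add_left]
  | monomial n a =>
    rw [X_mul_monomial, Phi_monomial, Phi_monomial, Function.iterate_succ_apply]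

lemma Phi_X_mul_right (h q : Polynomial V) :
    Phi der h (X * q) = X * Phi der h q := by
  rw [Phi, Phi, Polynomial.sum, Polynomial.sum, Finset.mul_sum]
  apply Finset.sum_congr rfl
  intro p _
  rw [iter_S_X_mul]; ring

section WithLeibniz

variable (hld : ∀ a b : V, der (a * b) = a * der b + b * der a)
include hld

lemma dCoeff_C_mul (a : V) (p : Polynomial V) :
    dCoeff der (C a * p) = C (der a) * p + C a * dCoeff der p := by
  ext k
  simp only [coeff_dCoeff, Polynomial.coeff_C_mul, Polynomial.coeff_add, hld]
  ring

lemma opS_C_mul (a : V) (p : Polynomial V) :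
    opS der (C a * p) = C a * opS der p + C (der a) * p := by
  rw [opS, opS, dCoeff_C_mul der hld]; ring

lemma opT_C_mul (a : V) (p : Polynomial V) :
    opT der (C a * p) = C a * opT der p - C (der a) * p := by
  simp only [opT_eq, opS_C_mul der hld]; ring

lemma Phi_opS_left (h q : Polynomial V) :
    Phi der (opS der h) q = opS der (Phi der h q) := by
  induction h using Polynomial.induction_on' with
  | add p r hp hr => rw [opS_add, Phi_add_left, hp, hr, Phi_add_left, opS_add]
  | monomial n a =>
    rw [opS, dCoeff_monomial, Phi_add_left, Phi_X_mul_left, Phi_monomial,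
      Phi_monomial, Phi_monomial, opS_C_mul der hld]
    rw [← Function.iterate_succ_apply, Function.iterate_succ_apply']

lemma Phi_opT_left (h q : Polynomial V) :
    Phi der (opT der h) q = -(opS der (Phi der h q)) := by
  rw [opT_eq, Phi_neg_left, Phi_opS_left der hld]

/-- Key identity, base case `n = m = 0`. -/
lemma key00 (h : Polynomial V) (a b : V) :
    negSubst der (C a * Phi der h (C b)) = C b * Phi der (negSubst der h) (C a) := by
  induction h using Polynomial.induction_on' with
  | add p r hp hr =>
    rw [Phi_add_left, mul_add, negSubst_add, hp, hr, negSubst_add, Phi_add_left,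
      mul_add]
  | monomial p c =>
    induction p generalizing a b with
    | zero =>
      rw [Phi_monomial, negSubst_monomial]
      simp only [Function.iterate_zero_apply]
      rw [show (C a * (C c * C b)) = C (a * c * b) by rw [C_mul, C_mul]; ring,
        negSubst_C, Phi_C_left]
      rw [C_mul, C_mul]; ring
    | succ p ih =>
      have e1 : monomial (p + 1) c = X * monomial p c := (X_mul_monomial p c).symm
      rw [e1, Phi_X_mul_left]
      rw [show opS der (C b) = X * C b + C (der b) by rw [opS, dCoeff_C]]
      rw [Phi_add_right, Phi_X_mul_right, mul_add, negSubst_add]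
      rw [show C a * (X * Phi der (monomial p c) (C b))
          = X * (C a * Phi der (monomial p c) (C b)) by ring]
      rw [negSubst_X_mul, ih a b, ih a (der b)]
      rw [negSubst_X_mul, Phi_opT_left der hld]
      rw [opT_C_mul der hld, opT_eq, opS]
      ring

/-- Key identity, case `m = 0`. -/
lemma keyN0 (n : ℕ) (h : Polynomial V) (a b : V) :
    negSubst der (C a * (opS der)^[n] (Phi der h (C b)))
      = C b * Phi der (negSubst der h) ((opT der)^[n] (C a)) := by
  induction n generalizing h a b with
  | zero => simpa using key00 der hld h a b
  | succ n ih =>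
    rw [Function.iterate_succ_apply']
    set r := (opS der)^[n] (Phi der h (C b)) with hr
    rw [show C a * opS der r = opS der (C a * r) - C (der a) * r by
      rw [opS_C_mul der hld]; ring]
    rw [sub_eq_add_neg, negSubst_add, negSubst_neg, negSubst_opS, ih h a b,
      ih h (der a) b]
    rw [Function.iterate_succ_apply']
    rw [show opT der ((opT der)^[n] (C a))
        = -(X * (opT der)^[n] (C a)) - dCoeff der ((opT der)^[n] (C a)) from rfl]
    rw [dCoeff_iter_T, dCoeff_C]
    rw [sub_eq_add_neg, Phi_add_right, Phi_neg_right, Phi_neg_right,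
      Phi_X_mul_right]
    ring

/-- Key identity, general case. -/
lemma keyNM (m n : ℕ) (h : Polynomial V) (a b : V) :
    negSubst der (C a * (opS der)^[n] (Phi der h ((opT der)^[m] (C b))))
      = C b * (opS der)^[m] (Phi der (negSubst der h) ((opT der)^[n] (C a))) := by
  induction m generalizing n h a b with
  | zero => simpa using keyN0 der hld n h a b
  | succ m ih =>
    rw [Function.iterate_succ_apply]
    rw [show opT der (C b) = -(X * C b) + -(C (der b)) by
      rw [opT, dCoeff_C]; ring]
    rw [iter_T_add, iter_T_neg, iter_T_neg, iter_T_X_mul]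
    rw [Phi_add_right, Phi_neg_right, Phi_neg_right, Phi_X_mul_right]
    rw [show (-(X * Phi der h ((opT der)^[m] (C b)))
        + -Phi der h ((opT der)^[m] (C (der b))))
        = -(X * Phi der h ((opT der)^[m] (C b)))
          - Phi der h ((opT der)^[m] (C (der b))) by ring]
    rw [sub_eq_add_neg, iter_S_add, iter_S_neg, iter_S_neg, iter_S_X_mul]
    rw [show C a * (-(X * (opS der)^[n] (Phi der h ((opT der)^[m] (C b))))
        + -(opS der)^[n] (Phi der h ((opT der)^[m] (C (der b)))))
        = -(X * (C a * (opS der)^[n] (Phi der h ((opT der)^[m] (C b)))))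
          + -(C a * (opS der)^[n] (Phi der h ((opT der)^[m] (C (der b))))) by
      ring]
    rw [negSubst_add, negSubst_neg, negSubst_neg, negSubst_X_mul, ih n h a b,
      ih n h a (der b)]
    rw [opT_C_mul der hld]
    rw [Function.iterate_succ_apply']
    rw [show opS der ((opS der)^[m] (Phi der (negSubst der h) ((opT der)^[n] (C a))))
        = X * (opS der)^[m] (Phi der (negSubst der h) ((opT der)^[n] (C a)))
          + dCoeff der ((opS der)^[m] (Phi der (negSubst der h) ((opT der)^[n] (C a))))
        from rfl]
    rw [opT_eq, opS]
    ring

end WithLeibniz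

lemma negSubst_finset_sum {α : Type*} (s : Finset α) (f : α → Polynomial V) :
    negSubst der (∑ x ∈ s, f x) = ∑ x ∈ s, negSubst der (f x) := by
  classical
  induction s using Finset.induction_on with
  | empty => simp [negSubst_zero]
  | insert _ _ hx ih => rw [Finset.sum_insert hx, Finset.sum_insert hx, negSubst_add, ih]

end AuxLemmas

/-- On the algebra of differential polynomials
`V = F[u_i^{(n)}]`, if the `λ`-bracket on generators `{u_i λ u_j} = H_{ji}(λ)`
satisfies skew-symmetry on generators, then the `λ`-bracket defined on all of
`V` by the Master Formula is skew-symmetric: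
`{f_λ g} + {g_{-λ-∂} f} = 0` for all `f, g ∈ V`. -/
theorem master_formula_skew_symmetry
    (F : Type*) [Field F] [CharZero F] (ℓ : ℕ)
    (der : MvPolynomial (Fin ℓ × ℕ) F →ₗ[F] MvPolynomial (Fin ℓ × ℕ) F)
    (hder : der = (MvPolynomial.mkDerivation F
      (fun p : Fin ℓ × ℕ => MvPolynomial.X (p.1, p.2 + 1))).toLinearMap)
    (Dp : Fin ℓ → ℕ → (MvPolynomial (Fin ℓ × ℕ) F →ₗ[F] MvPolynomial (Fin ℓ × ℕ) F))
    (hDp : ∀ i n, Dp i n = (MvPolynomial.pderiv (i, n)).toLinearMap)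
    (H : Fin ℓ → Fin ℓ → Polynomial (MvPolynomial (Fin ℓ × ℕ) F))
    (hskewgen : ∀ i j : Fin ℓ, H j i + negSubst der (H i j) = 0) :
    ∀ f g : MvPolynomial (Fin ℓ × ℕ) F,
      masterFormula der Dp H f g + negSubst der (masterFormula der Dp H g f) = 0 := by
  classical
  intro f g
  have hld : ∀ a b : MvPolynomial (Fin ℓ × ℕ) F,
      der (a * b) = a * der b + b * der a := by
    intro a b
    rw [hder]
    have h := (MvPolynomial.mkDerivation F
      (fun p : Fin ℓ × ℕ =>
        (MvPolynomial.X (p.1, p.2 + 1) : MvPolynomial (Fin ℓ × ℕ) F))).leibniz a b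
    simpa [smul_eq_mul] using h
  set M : Finset ℕ := (f.vars ∪ g.vars).image Prod.snd with hM
  have hDf : ∀ (i : Fin ℓ) (m : ℕ), m ∉ M → Dp i m f = 0 := by
    intro i m hm
    rw [hDp]
    refine MvPolynomial.pderiv_eq_zero_of_notMem_vars fun hv =>
      hm (Finset.mem_image.2 ⟨(i, m), Finset.mem_union_left _ hv, rfl⟩)
  have hDg : ∀ (j : Fin ℓ) (n : ℕ), n ∉ M → Dp j n g = 0 := by
    intro j n hn
    rw [hDp]
    refine MvPolynomial.pderiv_eq_zero_of_notMem_vars fun hv =>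
      hn (Finset.mem_image.2 ⟨(j, n), Finset.mem_union_right _ hv, rfl⟩)
  have conv : ∀ x y : MvPolynomial (Fin ℓ × ℕ) F,
      (∀ i m, m ∉ M → Dp i m x = 0) → (∀ j n, n ∉ M → Dp j n y = 0) →
      masterFormula der Dp H x y
        = ∑ i : Fin ℓ, ∑ j : Fin ℓ, ∑ m ∈ M, ∑ n ∈ M,
            C (Dp j n y) *
              (opS der)^[n] (Phi der (H j i) ((opT der)^[m] (C (Dp i m x)))) := by
    intro x y hx hy
    rw [masterFormula, finsum_eq_sum_of_fintype]
    apply Finset.sum_congr rfl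
    intro i _
    rw [finsum_eq_sum_of_fintype]
    apply Finset.sum_congr rfl
    intro j _
    rw [finsum_eq_finset_sum_of_support_subset (s := M)]
    · apply Finset.sum_congr rfl
      intro m _
      rw [finsum_eq_finset_sum_of_support_subset (s := M)]
      · rfl
      · intro n hn
        simp only [Function.mem_support, ne_eq] at hn
        by_contra hnM
        apply hn
        rw [hy j n hnM]
        simp
    · intro m hm
      simp only [Function.mem_support, ne_eq] at hm
      by_contra hmM
      apply hm
      have h0 : ∀ n : ℕ, C (Dp j n y) *
          (opS der)^[n] ((H j i).sum fun p c =>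
            C c * (opS der)^[p] ((opT der)^[m] (C (Dp i m x)))) = 0 := by
        intro n
        rw [hx i m hmM]
        have : ((H j i).sum fun p c =>
            C c * (opS der)^[p] ((opT der)^[m] (C (0 : MvPolynomial (Fin ℓ × ℕ) F))))
            = Phi der (H j i) ((opT der)^[m] (C 0)) := rfl
        rw [this, C_0, iter_T_zero, Phi_zero_right, iter_S_zero, mul_zero]
      simp only [h0]
      exact finsum_zero
  have hsk : ∀ i j : Fin ℓ, negSubst der (H j i) = -(H i j) := by
    intro i j
    exact eq_neg_of_add_eq_zero_right (hskewgen j i)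
  rw [conv f g hDf hDg, conv g f hDg hDf]
  simp only [negSubst_finset_sum, keyNM der hld, hsk, Phi_neg_left, iter_S_neg,
    mul_neg, Finset.sum_neg_distrib]
  rw [add_neg_eq_zero]
  rw [Finset.sum_comm]
  apply Finset.sum_congr rfl
  intro a _
  apply Finset.sum_congr rfl
  intro b _
  exact Finset.sum_comm
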